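/- arXiv:0903.1573 — 5 statements merged into one kernel-verified Lean document; each statement's English description precedes it below -/
import Mathlib

section
/- Let G be a group and for each positive integer i let τ_i(G) = {g ∈ G : g^n ∈ γ_i(G) for some positive integer n} be the isolator of the i-th term γ_i(G) of the lower central series. If G is nilpotent, then for all positive integers i and j the commutator subgroup satisfies (τ_i(G), τ_j(G)) ≤ τ_{i+j}(G). -/
open Subgroup
open scoped commutatorElement

section Helpers

universe u

variable {G : Type u} [Group G]

private lemma commute_pow_eq_one {G : Type*} [Group G] {a b : G} (hcom : Commute a b)
    {s t : ℕ} (ha : a ^ s = 1) (hb : b ^ t = 1) : (a * b) ^ (s * t) = 1 := by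
  rw [hcom.mul_pow, pow_mul, ha, one_pow, one_mul, mul_comm s t, pow_mul, hb, one_pow]

private lemma lcs_succ' (G : Type*) [Group G] (n : ℕ) :
    (⊤ : Subgroup G).lowerCentralSeries (n + 1) = ⁅(⊤ : Subgroup G).lowerCentralSeries n, (⊤ : Subgroup G)⁆ := by
  rw [Subgroup.commutator_def, Subgroup.lowerCentralSeries_succ]
  rfl

/-- `(c*u)^n = c^n * w` with `w` in the normal subgroup `N` containing `u`. -/
private lemma conj_pow_aux {N : Subgroup G} [N.Normal] {c u : G} (hu : u ∈ N) (n : ℕ) :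
    ∃ w ∈ N, (c * u) ^ n = c ^ n * w := by
  induction n with
  | zero => exact ⟨1, N.one_mem, by simp⟩
  | succ n ih =>
    obtain ⟨w, hw, hw2⟩ := ih
    refine ⟨(c⁻¹ * w * c) * u, N.mul_mem (Subgroup.Normal.conj_mem' inferInstance w hw c) hu, ?_⟩
    rw [pow_succ, hw2, pow_succ]
    group

/-- Key commutator-power identity: if `⁅x,g⁆ ∈ Z_{k+1}` then
`⁅x^n,g⁆ = ⁅x,g⁆^n * z` with `z ∈ Z_k`. -/
private lemma commutator_pow_aux {k : ℕ} {x g : G}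
    (h : x * g * x⁻¹ * g⁻¹ ∈ Subgroup.upperCentralSeries G (k + 1)) (n : ℕ) :
    ∃ z ∈ Subgroup.upperCentralSeries G k,
      x ^ n * g * (x ^ n)⁻¹ * g⁻¹ = (x * g * x⁻¹ * g⁻¹) ^ n * z := by
  induction n with
  | zero => exact ⟨1, (Subgroup.upperCentralSeries G k).one_mem, by simp⟩
  | succ n ih =>
    obtain ⟨z, hz, hz2⟩ := ih
    set c := x * g * x⁻¹ * g⁻¹ with hc
    have hu : c⁻¹ * x * c * x⁻¹ ∈ Subgroup.upperCentralSeries G k := by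
      have h2 := Subgroup.mem_upperCentralSeries_succ_iff.mp ((Subgroup.upperCentralSeries G (k+1)).inv_mem h) x
      simpa [commutatorElement_def] using h2
    obtain ⟨w, hw, hw2⟩ := conj_pow_aux (N := Subgroup.upperCentralSeries G k) (c := c) hu n
    have key : x ^ (n+1) * g * (x ^ (n+1))⁻¹ * g⁻¹
        = x * (x ^ n * g * (x ^ n)⁻¹ * g⁻¹) * x⁻¹ * c := by
      rw [hc]; group
    have conj : x * c ^ n * x⁻¹ = (c * (c⁻¹ * x * c * x⁻¹)) ^ n := by
      have h2 : c * (c⁻¹ * x * c * x⁻¹) = x * c * x⁻¹ := by group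
      rw [h2]
      rw [conj_pow]
    refine ⟨c⁻¹ * (w * (x * z * x⁻¹)) * c, ?_, ?_⟩
    · have hxz : x * z * x⁻¹ ∈ Subgroup.upperCentralSeries G k :=
        Subgroup.Normal.conj_mem inferInstance z hz x
      exact Subgroup.Normal.conj_mem' inferInstance _
        ((Subgroup.upperCentralSeries G k).mul_mem hw hxz) c
    · calc x ^ (n+1) * g * (x ^ (n+1))⁻¹ * g⁻¹
          = x * (c ^ n * z) * x⁻¹ * c := by rw [key, hz2]
        _ = (x * c ^ n * x⁻¹) * (x * z * x⁻¹) * c := by group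
        _ = (c ^ n * w) * (x * z * x⁻¹) * c := by rw [conj, hw2]
        _ = c ^ (n+1) * (c⁻¹ * (w * (x * z * x⁻¹)) * c) := by rw [pow_succ]; group

/-- With a torsion-free hypothesis, successive terms of the upper central series are
relatively isolated. -/
private lemma ucs_isolated_step (htf : ∀ (a : G) (n : ℕ), 0 < n → a ^ n = 1 → a = 1) :
    ∀ (k : ℕ) (x : G) (n : ℕ), 0 < n → x ∈ Subgroup.upperCentralSeries G (k + 1) →
      x ^ n ∈ Subgroup.upperCentralSeries G k → x ∈ Subgroup.upperCentralSeries G k := by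
  intro k
  induction k with
  | zero =>
    intro x n hn _ hxn
    have hx1 : x ^ n = 1 := by simpa [Subgroup.upperCentralSeries_zero] using hxn
    have hx := htf x n hn hx1
    simp [hx, Subgroup.upperCentralSeries_zero]
  | succ k ih =>
    intro x n hn hx1 hxn
    rw [Subgroup.mem_upperCentralSeries_succ_iff]
    intro g
    have hc1 : x * g * x⁻¹ * g⁻¹ ∈ Subgroup.upperCentralSeries G (k + 1) :=
      Subgroup.mem_upperCentralSeries_succ_iff.mp hx1 g
    obtain ⟨z, hz, hz2⟩ := commutator_pow_aux (k := k) hc1 n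
    have hxng : x ^ n * g * (x ^ n)⁻¹ * g⁻¹ ∈ Subgroup.upperCentralSeries G k :=
      Subgroup.mem_upperCentralSeries_succ_iff.mp hxn g
    have hcn : (x * g * x⁻¹ * g⁻¹) ^ n ∈ Subgroup.upperCentralSeries G k := by
      have heq : (x * g * x⁻¹ * g⁻¹) ^ n = (x ^ n * g * (x ^ n)⁻¹ * g⁻¹) * z⁻¹ := by
        rw [hz2]; group
      rw [heq]
      exact (Subgroup.upperCentralSeries G k).mul_mem hxng ((Subgroup.upperCentralSeries G k).inv_mem hz)
    exact ih _ n hn hc1 hcn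

/-- In a torsion-free nilpotent group, every term of the upper central series is isolated. -/
private lemma ucs_isolated (htf : ∀ (a : G) (n : ℕ), 0 < n → a ^ n = 1 → a = 1)
    {c : ℕ} (hc : Subgroup.upperCentralSeries G c = ⊤) (k : ℕ) (x : G) (n : ℕ) (hn : 0 < n)
    (hxn : x ^ n ∈ Subgroup.upperCentralSeries G k) : x ∈ Subgroup.upperCentralSeries G k := by
  have aux : ∀ (d : ℕ) (x : G), x ∈ Subgroup.upperCentralSeries G (k + d) →
      x ^ n ∈ Subgroup.upperCentralSeries G k → x ∈ Subgroup.upperCentralSeries G k := by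
    intro d
    induction d with
    | zero => intro x hx _; exact hx
    | succ d ih =>
      intro x hx hxn
      have hx' : x ∈ Subgroup.upperCentralSeries G (k + d) := by
        apply ucs_isolated_step htf (k + d) x n hn hx
        exact Subgroup.upperCentralSeries_mono G (Nat.le_add_right k d) hxn
      exact ih x hx' hxn
  apply aux c x _ hxn
  have hle : (⊤ : Subgroup G) ≤ Subgroup.upperCentralSeries G (k + c) := by
    rw [← hc]; exact Subgroup.upperCentralSeries_mono G (Nat.le_add_left c k)
  exact hle (mem_top x)

end Helpers

section Malcev

universe u

/-- Mal'cev: in a torsion-free nilpotent group, commuting with a power implies commuting. -/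
private lemma malcev_aux : ∀ (c : ℕ) (G : Type u) [Group G],
    Subgroup.upperCentralSeries G c = ⊤ →
    (∀ (a : G) (n : ℕ), 0 < n → a ^ n = 1 → a = 1) →
    ∀ (a g : G) (n : ℕ), 0 < n → Commute (a ^ n) g → Commute a g := by
  intro c
  induction c with
  | zero =>
    intro G _ hc _ a g n _ _
    have ha : a ∈ Subgroup.upperCentralSeries G 0 := hc ▸ mem_top a
    have hg : g ∈ Subgroup.upperCentralSeries G 0 := hc ▸ mem_top g
    rw [Subgroup.upperCentralSeries_zero, mem_bot] at ha hg
    rw [Commute, SemiconjBy, ha, hg]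
  | succ c ih =>
    intro G _ hc htf a g n hn hcomm
    let π := QuotientGroup.mk' (Subgroup.center G)
    have hπ : Function.Surjective π := QuotientGroup.mk'_surjective _
    have hc' : Subgroup.upperCentralSeries (G ⧸ Subgroup.center G) c = ⊤ := by
      rw [eq_top_iff]
      rintro q -
      obtain ⟨x, rfl⟩ := hπ q
      have hx : x ∈ comap (QuotientGroup.mk' (Subgroup.center G))
          (Subgroup.upperCentralSeries (G ⧸ Subgroup.center G) c) := by
        rw [Subgroup.comap_upperCentralSeries_quotient_center]
        exact hc ▸ mem_top x
      exact hx
    have htf' : ∀ (q : G ⧸ Subgroup.center G) (m : ℕ), 0 < m → q ^ m = 1 → q = 1 := by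
      intro q m hm hq
      obtain ⟨x, rfl⟩ := hπ q
      have hxm : x ^ m ∈ Subgroup.center G := by
        have hq1 : π (x ^ m) = 1 := by rw [map_pow]; exact hq
        rwa [← MonoidHom.mem_ker, QuotientGroup.ker_mk'] at hq1
      have hx1 : x ^ m ∈ Subgroup.upperCentralSeries G 1 := by rwa [Subgroup.upperCentralSeries_one]
      have hxc : x ∈ Subgroup.upperCentralSeries G 1 := ucs_isolated htf hc 1 x m hm hx1
      rw [Subgroup.upperCentralSeries_one] at hxc
      have : π x ∈ Subgroup.map π (Subgroup.center G) := mem_map_of_mem π hxc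
      show π x = 1
      rw [← MonoidHom.mem_ker, QuotientGroup.ker_mk']
      exact hxc
    have hq : Commute (π a) (π g) := by
      have hpow : Commute ((π a) ^ n) (π g) := by
        have hmap := hcomm.map π
        rwa [map_pow] at hmap
      exact ih (G ⧸ Subgroup.center G) hc' htf' (π a) (π g) n hn hpow
    have hcen : a * g * a⁻¹ * g⁻¹ ∈ Subgroup.upperCentralSeries G 1 := by
      rw [Subgroup.upperCentralSeries_one]
      have h1 : π ⁅a, g⁆ = 1 := by
        rw [map_commutatorElement]
        exact commutatorElement_eq_one_iff_commute.mpr hq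
      rw [← MonoidHom.mem_ker, QuotientGroup.ker_mk'] at h1
      rwa [commutatorElement_def] at h1
    obtain ⟨z, hz, hz2⟩ := commutator_pow_aux (k := 0) hcen n
    rw [Subgroup.upperCentralSeries_zero, mem_bot] at hz
    rw [hz, mul_one] at hz2
    have hl : a ^ n * g * (a ^ n)⁻¹ * g⁻¹ = 1 := by
      have h2 := commutatorElement_eq_one_iff_commute.mpr hcomm
      rwa [commutatorElement_def] at h2
    have hcn : (a * g * a⁻¹ * g⁻¹) ^ n = 1 := by rw [← hz2, hl]
    have h1 : a * g * a⁻¹ * g⁻¹ = 1 := htf _ n hn hcn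
    rw [← commutatorElement_def] at h1
    exact commutatorElement_eq_one_iff_commute.mp h1

/-- Commuting powers imply commuting, in torsion-free nilpotent groups. -/
private lemma malcev {G : Type u} [Group G] [Group.IsNilpotent G]
    (htf : ∀ (a : G) (n : ℕ), 0 < n → a ^ n = 1 → a = 1)
    (a b : G) (m n : ℕ) (hm : 0 < m) (hn : 0 < n)
    (h : Commute (a ^ m) (b ^ n)) : Commute a b := by
  obtain ⟨c, hc⟩ := Group.IsNilpotent.nilpotent (G := G)
  have h1 : Commute a (b ^ n) := malcev_aux c G hc htf a (b ^ n) m hm h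
  have h2 : Commute b a := malcev_aux c G hc htf b a n hn h1.symm
  exact h2.symm

end Malcev

section Torsion

universe u

variable {H : Type u} [Group H]

/-- If the deepest nontrivial term of the lower central series is `L = ⁅P,⊤⁆` (central),
and the group is generated by two torsion elements, then `L` is torsion. -/
private lemma deep_term_torsion {c : ℕ} (hbot : (⊤ : Subgroup H).lowerCentralSeries (c + 2) = ⊥)
    (x y : H) (hgen : Subgroup.closure ({x, y} : Set H) = ⊤)
    {p q : ℕ} (hp : 0 < p) (hq : 0 < q) (hxp : x ^ p = 1) (hyq : y ^ q = 1) :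
    ∀ v ∈ (⊤ : Subgroup H).lowerCentralSeries (c + 1), ∃ s : ℕ, 0 < s ∧ v ^ s = 1 := by
  set L := (⊤ : Subgroup H).lowerCentralSeries (c + 1) with hLdef
  have hLcen : ∀ v ∈ L, ∀ h : H, v * h = h * v := by
    intro v hv h
    have hb : ⁅L, (⊤ : Subgroup H)⁆ = ⊥ := by
      rw [← lcs_succ' H (c + 1)]; exact hbot
    have hvc := commutator_eq_bot_iff_le_centralizer.mp hb hv
    exact (Subgroup.mem_centralizer_iff.mp hvc h (mem_top h)).symm
  set P := (⊤ : Subgroup H).lowerCentralSeries c with hPdef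
  have hLP : L = ⁅P, (⊤ : Subgroup H)⁆ := lcs_succ' H c
  -- generators of L are torsion
  have hgenTor : ∀ u ∈ P, ∀ h : H, ∃ s : ℕ, 0 < s ∧ ⁅u, h⁆ ^ s = 1 := by
    intro u hu
    have hval : ∀ h : H, ⁅u, h⁆ ∈ L := by
      intro h
      rw [hLP]
      exact commutator_mem_commutator hu (mem_top h)
    have hhom : ∀ h₁ h₂ : H, ⁅u, h₁ * h₂⁆ = ⁅u, h₁⁆ * ⁅u, h₂⁆ := by
      intro h₁ h₂
      have e1 : ⁅u, h₁ * h₂⁆ = ⁅u, h₁⁆ * (h₁ * ⁅u, h₂⁆ * h₁⁻¹) := by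
        simp only [commutatorElement_def]; group
      rw [e1, ← hLcen _ (hval h₂) h₁]
      group
    let φ : H →* H := MonoidHom.mk' (fun h => ⁅u, h⁆) hhom
    intro h
    have hmem : h ∈ Subgroup.closure ({x, y} : Set H) := hgen ▸ mem_top h
    have key : ∃ s : ℕ, 0 < s ∧ φ h ^ s = 1 := by
      induction hmem using Subgroup.closure_induction with
      | mem g hg =>
        rcases hg with hg | hg
        · subst hg
          exact ⟨p, hp, by rw [← map_pow, hxp, map_one]⟩
        · rw [Set.mem_singleton_iff] at hg; subst hg
          exact ⟨q, hq, by rw [← map_pow, hyq, map_one]⟩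
      | one => exact ⟨1, one_pos, by simp⟩
      | mul g₁ g₂ hg₁ hg₂ ih₁ ih₂ =>
        obtain ⟨s₁, hs₁, h₁⟩ := ih₁
        obtain ⟨s₂, hs₂, h₂⟩ := ih₂
        refine ⟨s₁ * s₂, Nat.mul_pos hs₁ hs₂, ?_⟩
        have hcom : Commute (φ g₁) (φ g₂) := (hLcen _ (hval g₂) (φ g₁)).symm
        rw [map_mul]
        exact commute_pow_eq_one hcom h₁ h₂
      | inv g hg ihg =>
        obtain ⟨s, hs, h1⟩ := ihg
        exact ⟨s, hs, by rw [map_inv, inv_pow, h1, inv_one]⟩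
    exact key
  -- closure induction over L
  intro v hv
  rw [hLP, Subgroup.commutator_def] at hv
  induction hv using Subgroup.closure_induction with
  | mem g hg =>
    obtain ⟨g₁, hg₁, g₂, -, rfl⟩ := hg
    exact hgenTor g₁ hg₁ g₂
  | one => exact ⟨1, one_pos, by simp⟩
  | mul g₁ g₂ hg₁ hg₂ ih₁ ih₂ =>
    obtain ⟨s₁, hs₁, h₁⟩ := ih₁
    obtain ⟨s₂, hs₂, h₂⟩ := ih₂
    refine ⟨s₁ * s₂, Nat.mul_pos hs₁ hs₂, ?_⟩
    have hmem₁ : g₁ ∈ L := by rw [hLP, Subgroup.commutator_def]; exact hg₁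
    have hcom : Commute g₁ g₂ := hLcen _ hmem₁ g₂
    exact commute_pow_eq_one hcom h₁ h₂
  | inv g hg ihg =>
    obtain ⟨s, hs, h1⟩ := ihg
    exact ⟨s, hs, by rw [inv_pow, h1, inv_one]⟩

/-- Lower central series is mapped onto by surjective homomorphisms. -/
private lemma lcs_map_surj {G G' : Type*} [Group G] [Group G'] (f : G →* G')
    (hf : Function.Surjective f) :
    ∀ n, Subgroup.map f ((⊤ : Subgroup G).lowerCentralSeries n) = (⊤ : Subgroup G').lowerCentralSeries n := by
  intro n
  induction n with
  | zero =>
    rw [Subgroup.lowerCentralSeries_zero, Subgroup.lowerCentralSeries_zero, ← MonoidHom.range_eq_map,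
      MonoidHom.range_eq_top_of_surjective f hf]
  | succ n ih =>
    rw [lcs_succ', lcs_succ', Subgroup.map_commutator, ih,
      ← MonoidHom.range_eq_map, MonoidHom.range_eq_top_of_surjective f hf]

/-- Product of two torsion elements generating the whole group is torsion;
induction on the length of the lower central series. -/
private lemma torsion_mul_aux : ∀ (c : ℕ) (H : Type u) [Group H],
    (⊤ : Subgroup H).lowerCentralSeries c = ⊥ →
    ∀ x y : H, Subgroup.closure ({x, y} : Set H) = ⊤ →
    ∀ p q : ℕ, 0 < p → 0 < q → x ^ p = 1 → y ^ q = 1 →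
    ∃ r : ℕ, 0 < r ∧ (x * y) ^ r = 1 := by
  intro c
  induction c with
  | zero =>
    intro H _ hbot x y _ p q _ _ _ _
    have hm : x * y ∈ (⊤ : Subgroup H).lowerCentralSeries 0 := by
      rw [Subgroup.lowerCentralSeries_zero]; exact mem_top _
    rw [hbot, mem_bot] at hm
    exact ⟨1, one_pos, by simpa using hm⟩
  | succ c ih =>
    intro H _ hbot x y hgen p q hp hq hxp hyq
    cases c with
    | zero =>
      -- H is abelian
      have hcomm : Commute x y := by
        have h1 : ⁅x, y⁆ ∈ (⊤ : Subgroup H).lowerCentralSeries 1 := by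
          rw [lcs_succ' H 0]
          exact commutator_mem_commutator (mem_top x) (mem_top y)
        rw [hbot, mem_bot] at h1
        exact commutatorElement_eq_one_iff_commute.mp h1
      exact ⟨p * q, Nat.mul_pos hp hq, commute_pow_eq_one hcomm hxp hyq⟩
    | succ c' =>
      -- quotient by the last nontrivial term L
      set L := (⊤ : Subgroup H).lowerCentralSeries (c' + 1) with hLdef
      have hLnormal : L.Normal := inferInstance
      let π := QuotientGroup.mk' L
      have hπ : Function.Surjective π := QuotientGroup.mk'_surjective L
      have hbot' : (⊤ : Subgroup (H ⧸ L)).lowerCentralSeries (c' + 1) = ⊥ := by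
        rw [← lcs_map_surj π hπ (c' + 1)]
        rw [eq_bot_iff]
        rintro g ⟨h, hh, rfl⟩
        rw [mem_bot, ← MonoidHom.mem_ker, QuotientGroup.ker_mk']
        exact hh
      have hgen' : Subgroup.closure ({π x, π y} : Set (H ⧸ L)) = ⊤ := by
        have h1 : Subgroup.map π (Subgroup.closure ({x, y} : Set H)) = ⊤ := by
          rw [hgen, ← MonoidHom.range_eq_map, MonoidHom.range_eq_top_of_surjective π hπ]
        rw [MonoidHom.map_closure, Set.image_pair] at h1
        exact h1
      obtain ⟨r, hr, hr1⟩ := ih (H ⧸ L) hbot' (π x) (π y) hgen' p q hp hq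
        (by rw [← map_pow, hxp, map_one]) (by rw [← map_pow, hyq, map_one])
      have hmemL : (x * y) ^ r ∈ L := by
        have h2 : π ((x * y) ^ r) = 1 := by
          rw [map_pow, map_mul]; exact hr1
        rwa [← MonoidHom.mem_ker, QuotientGroup.ker_mk'] at h2
      obtain ⟨s, hs, hs1⟩ := deep_term_torsion hbot x y hgen hp hq hxp hyq _ hmemL
      exact ⟨r * s, Nat.mul_pos hr hs, by rw [pow_mul, hs1]⟩

/-- In a nilpotent group, the product of two torsion elements is torsion. -/
private lemma torsion_mul {G : Type u} [Group G] [Group.IsNilpotent G] {x y : G}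
    (hx : ∃ p : ℕ, 0 < p ∧ x ^ p = 1) (hy : ∃ q : ℕ, 0 < q ∧ y ^ q = 1) :
    ∃ r : ℕ, 0 < r ∧ (x * y) ^ r = 1 := by
  obtain ⟨p, hp, hxp⟩ := hx
  obtain ⟨q, hq, hyq⟩ := hy
  set K := Subgroup.closure ({x, y} : Set G) with hK
  have hxK : x ∈ K := subset_closure (by simp)
  have hyK : y ∈ K := subset_closure (by simp)
  obtain ⟨c, hc⟩ := Subgroup.nilpotent_iff_lowerCentralSeries.mp ‹Group.IsNilpotent G›
  have hbotK : (⊤ : Subgroup K).lowerCentralSeries c = ⊥ := by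
    rw [eq_bot_iff]
    intro a ha
    have h1 : (a : G) ∈ (⊤ : Subgroup G).lowerCentralSeries c :=
      Subgroup.lowerCentralSeries_map_subtype_le K c (mem_map_of_mem K.subtype ha)
    rw [hc, mem_bot] at h1
    rw [mem_bot]
    exact Subtype.ext h1
  set x' : K := ⟨x, hxK⟩
  set y' : K := ⟨y, hyK⟩
  have hgenK : Subgroup.closure ({x', y'} : Set K) = ⊤ := by
    have h1 := Subgroup.closure_preimage_eq_top ({x, y} : Set G)
    rw [← h1]
    congr 1
    ext ⟨g, hg⟩
    simp [Subtype.ext_iff, x', y']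
  obtain ⟨r, hr, hr1⟩ := torsion_mul_aux c K hbotK x' y' hgenK p q hp hq
    (by ext; simpa using hxp) (by ext; simpa using hyq)
  refine ⟨r, hr, ?_⟩
  have : ((x' * y') ^ r : K) = 1 := hr1
  simpa [Subtype.ext_iff] using this

end Torsion

section LCSComm

universe u

/-- `⁅γ_{a+1}, γ_{b+1}⁆ ≤ γ_{a+b+2}` (0-based indexing). -/
private lemma lcs_comm : ∀ (b : ℕ) (G : Type u) [Group G] (a : ℕ),
    ⁅(⊤ : Subgroup G).lowerCentralSeries a, (⊤ : Subgroup G).lowerCentralSeries b⁆ ≤ (⊤ : Subgroup G).lowerCentralSeries (a + b + 1) := by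
  intro b
  induction b with
  | zero =>
    intro G _ a
    rw [Subgroup.lowerCentralSeries_zero]
    exact le_of_eq (lcs_succ' G a).symm
  | succ b ih =>
    intro G _ a
    set N := (⊤ : Subgroup G).lowerCentralSeries (a + (b + 1) + 1) with hN
    have hNnormal : N.Normal := inferInstance
    let π := QuotientGroup.mk' N
    have hπ : Function.Surjective π := QuotientGroup.mk'_surjective N
    have hQbot : (⊤ : Subgroup (G ⧸ N)).lowerCentralSeries (a + b + 2) = ⊥ := by
      have he : a + b + 2 = a + (b + 1) + 1 := by omega
      rw [he, ← lcs_map_surj π hπ, eq_bot_iff]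
      rintro g ⟨h, hh, rfl⟩
      rw [mem_bot, ← MonoidHom.mem_ker, QuotientGroup.ker_mk']
      exact hh
    -- three subgroups lemma in the quotient
    have h1 : ⁅⁅(⊤ : Subgroup (G ⧸ N)), (⊤ : Subgroup (G ⧸ N)).lowerCentralSeries a⁆,
        (⊤ : Subgroup (G ⧸ N)).lowerCentralSeries b⁆ = ⊥ := by
      rw [commutator_comm (⊤ : Subgroup (G ⧸ N)) ((⊤ : Subgroup (G ⧸ N)).lowerCentralSeries a),
        ← lcs_succ' (G ⧸ N) a]
      rw [eq_bot_iff]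
      calc ⁅(⊤ : Subgroup (G ⧸ N)).lowerCentralSeries (a + 1), (⊤ : Subgroup (G ⧸ N)).lowerCentralSeries b⁆
          ≤ (⊤ : Subgroup (G ⧸ N)).lowerCentralSeries (a + 1 + b + 1) := ih (G ⧸ N) (a + 1)
        _ ≤ ⊥ := by
            have he : a + 1 + b + 1 = a + b + 2 := by omega
            rw [he, hQbot]
    have h2 : ⁅⁅(⊤ : Subgroup (G ⧸ N)).lowerCentralSeries a, (⊤ : Subgroup (G ⧸ N)).lowerCentralSeries b⁆,
        (⊤ : Subgroup (G ⧸ N))⁆ = ⊥ := by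
      rw [eq_bot_iff]
      calc ⁅⁅(⊤ : Subgroup (G ⧸ N)).lowerCentralSeries a, (⊤ : Subgroup (G ⧸ N)).lowerCentralSeries b⁆, (⊤ : Subgroup (G ⧸ N))⁆
          ≤ ⁅(⊤ : Subgroup (G ⧸ N)).lowerCentralSeries (a + b + 1), (⊤ : Subgroup (G ⧸ N))⁆ :=
            commutator_mono (ih (G ⧸ N) a) le_rfl
        _ = (⊤ : Subgroup (G ⧸ N)).lowerCentralSeries (a + b + 2) := (lcs_succ' (G ⧸ N) (a + b + 1)).symm
        _ ≤ ⊥ := hQbot.le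
    have h3 : ⁅⁅(⊤ : Subgroup (G ⧸ N)).lowerCentralSeries b, (⊤ : Subgroup (G ⧸ N))⁆,
        (⊤ : Subgroup (G ⧸ N)).lowerCentralSeries a⁆ = ⊥ :=
      commutator_commutator_eq_bot_of_rotate h1 h2
    have hmain : ⁅(⊤ : Subgroup (G ⧸ N)).lowerCentralSeries a, (⊤ : Subgroup (G ⧸ N)).lowerCentralSeries (b + 1)⁆ = ⊥ := by
      rw [lcs_succ' (G ⧸ N) b, commutator_comm]
      exact h3
    -- pull back
    intro g hg
    have hmap : π g ∈ Subgroup.map π ⁅(⊤ : Subgroup G).lowerCentralSeries a, (⊤ : Subgroup G).lowerCentralSeries (b + 1)⁆ :=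
      mem_map_of_mem π hg
    rw [Subgroup.map_commutator, lcs_map_surj π hπ, lcs_map_surj π hπ, hmain, mem_bot] at hmap
    have hker : g ∈ (QuotientGroup.mk' N).ker := MonoidHom.mem_ker.mpr hmap
    rwa [QuotientGroup.ker_mk'] at hker

end LCSComm

/-- The isolator `τ_i(G)` of the `i`-th term of the lower central series of `G`
(1-based indexing: `γ_i(G) = (⊤ : Subgroup G).lowerCentralSeries (i-1)`). -/
def isolator (G : Type*) [Group G] (i : ℕ) : Set G :=
  {g : G | ∃ n : ℕ, 0 < n ∧ g ^ n ∈ (⊤ : Subgroup G).lowerCentralSeries (i - 1)}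

/-- If `G` is nilpotent, then `(τ_i(G), τ_j(G)) ≤ τ_{i+j}(G)`: the commutator of an
element of `τ_i(G)` and an element of `τ_j(G)` lies in `τ_{i+j}(G)`. -/
theorem isolator_commutator_mem (G : Type*) [Group G] [Group.IsNilpotent G]
    (i j : ℕ) (hi : 1 ≤ i) (hj : 1 ≤ j) (x y : G)
    (hx : x ∈ isolator G i) (hy : y ∈ isolator G j) :
    x⁻¹ * y⁻¹ * x * y ∈ isolator G (i + j) := by
  obtain ⟨m, hm, hxm⟩ := hx
  obtain ⟨n, hn, hyn⟩ := hy
  set a := x⁻¹ with ha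
  set b := y⁻¹ with hb
  have ham : a ^ m ∈ (⊤ : Subgroup G).lowerCentralSeries (i - 1) := by
    rw [ha, inv_pow]
    exact ((⊤ : Subgroup G).lowerCentralSeries (i - 1)).inv_mem hxm
  have hbn : b ^ n ∈ (⊤ : Subgroup G).lowerCentralSeries (j - 1) := by
    rw [hb, inv_pow]
    exact ((⊤ : Subgroup G).lowerCentralSeries (j - 1)).inv_mem hyn
  set N := (⊤ : Subgroup G).lowerCentralSeries (i + j - 1) with hNdef
  have hNnormal : N.Normal := inferInstance
  let π := QuotientGroup.mk' N
  have hπ : Function.Surjective π := QuotientGroup.mk'_surjective N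
  have hQbot : (⊤ : Subgroup (G ⧸ N)).lowerCentralSeries (i + j - 1) = ⊥ := by
    rw [← lcs_map_surj π hπ, eq_bot_iff]
    rintro g ⟨h, hh, rfl⟩
    rw [mem_bot, ← MonoidHom.mem_ker, QuotientGroup.ker_mk']
    exact hh
  -- the images of the powers commute
  have hcomm : Commute ((π a) ^ m) ((π b) ^ n) := by
    have h1 : (π a) ^ m ∈ (⊤ : Subgroup (G ⧸ N)).lowerCentralSeries (i - 1) := by
      rw [← map_pow]
      exact Subgroup.lowerCentralSeries.map π (i - 1) (mem_map_of_mem π ham)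
    have h2 : (π b) ^ n ∈ (⊤ : Subgroup (G ⧸ N)).lowerCentralSeries (j - 1) := by
      rw [← map_pow]
      exact Subgroup.lowerCentralSeries.map π (j - 1) (mem_map_of_mem π hbn)
    have h3 : ⁅(π a) ^ m, (π b) ^ n⁆ ∈
        ⁅(⊤ : Subgroup (G ⧸ N)).lowerCentralSeries (i - 1), (⊤ : Subgroup (G ⧸ N)).lowerCentralSeries (j - 1)⁆ :=
      commutator_mem_commutator h1 h2
    have h4 : ⁅(⊤ : Subgroup (G ⧸ N)).lowerCentralSeries (i - 1), (⊤ : Subgroup (G ⧸ N)).lowerCentralSeries (j - 1)⁆ ≤ ⊥ := by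
      have h5 := lcs_comm (j - 1) (G ⧸ N) (i - 1)
      have he : i - 1 + (j - 1) + 1 = i + j - 1 := by omega
      rw [he, hQbot] at h5
      exact h5
    have h6 : ⁅(π a) ^ m, (π b) ^ n⁆ = 1 := by
      have := h4 h3
      rwa [mem_bot] at this
    exact commutatorElement_eq_one_iff_commute.mp h6
  -- torsion subgroup of the quotient
  let T : Subgroup (G ⧸ N) :=
    { carrier := {g | ∃ s : ℕ, 0 < s ∧ g ^ s = 1}
      one_mem' := ⟨1, one_pos, one_pow 1⟩
      mul_mem' := fun hg hh => torsion_mul hg hh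
      inv_mem' := fun ⟨s, hs, h1⟩ => ⟨s, hs, by rw [inv_pow, h1, inv_one]⟩ }
  haveI hTnormal : T.Normal := by
    constructor
    rintro g ⟨s, hs, h1⟩ h
    exact ⟨s, hs, by rw [conj_pow, h1, mul_one, mul_inv_cancel]⟩
  have hTF : ∀ (u : (G ⧸ N) ⧸ T) (k : ℕ), 0 < k → u ^ k = 1 → u = 1 := by
    intro u k hk hu
    obtain ⟨w, rfl⟩ := QuotientGroup.mk'_surjective T u
    have hw : w ^ k ∈ T := by
      have h1 : QuotientGroup.mk' T (w ^ k) = 1 := by rw [map_pow]; exact hu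
      rwa [← MonoidHom.mem_ker, QuotientGroup.ker_mk'] at h1
    obtain ⟨s, hs, h1⟩ := hw
    have hwT : w ∈ T := ⟨k * s, Nat.mul_pos hk hs, by rw [pow_mul]; exact h1⟩
    rw [← MonoidHom.mem_ker, QuotientGroup.ker_mk'] at *
    exact hwT
  let ρ := QuotientGroup.mk' T
  have hcomm2 : Commute ((ρ (π a)) ^ m) ((ρ (π b)) ^ n) := by
    have := hcomm.map ρ
    rwa [map_pow, map_pow] at this
  have hfinal : Commute (ρ (π a)) (ρ (π b)) := malcev hTF _ _ m n hm hn hcomm2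
  have hT : ⁅π a, π b⁆ ∈ T := by
    have h1 : ρ ⁅π a, π b⁆ = 1 := by
      rw [map_commutatorElement]
      exact commutatorElement_eq_one_iff_commute.mpr hfinal
    rwa [← MonoidHom.mem_ker, QuotientGroup.ker_mk'] at h1
  obtain ⟨k, hk, hk1⟩ := hT
  refine ⟨k, hk, ?_⟩
  have hab : x⁻¹ * y⁻¹ * x * y = ⁅a, b⁆ := by
    rw [commutatorElement_def, ha, hb]
    group
  rw [hab]
  have h1 : π (⁅a, b⁆ ^ k) = 1 := by
    rw [map_pow, map_commutatorElement]
    exact hk1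
  rw [← MonoidHom.mem_ker, QuotientGroup.ker_mk'] at h1
  exact h1
end

section
/- Let G be a torsion-free nilpotent group and x, y ∈ G with x^m = y^m for some positive integer m. Then x = y. -/
open Subgroup hiding lowerCentralSeries lowerCentralSeries_one lowerCentralSeries_eq_bot_iff_nilpotencyClass_le
open scoped commutatorElement

/-- A monoid is torsion-free if no nontrivial elements have finite order
(the Mathlib definition of December 2024, since removed). -/
def Monoid.IsTorsionFree (G : Type*) [Monoid G] : Prop :=
  ∀ g : G, g ≠ 1 → ¬IsOfFinOrder g

private lemma Monoid.IsTorsionFree.subgroup {G : Type*} [Group G] (htf : Monoid.IsTorsionFree G)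
    (K : Subgroup G) : Monoid.IsTorsionFree K :=
  fun g hg hfin => htf g (fun h => hg (Subtype.ext h)) (K.subtype.isOfFinOrder hfin)

namespace Port

/-- The lower central series of the group `G` (the old root-level definition). -/
abbrev lowerCentralSeries (G : Type*) [Group G] (n : ℕ) : Subgroup G :=
  (⊤ : Subgroup G).lowerCentralSeries n

theorem lowerCentralSeries_one (G : Type*) [Group G] :
    lowerCentralSeries G 1 = _root_.commutator G := rfl

/-- Elements of the closure of a pairwise-commuting set commute. -/
private lemma commute_of_mem_closure_aux {Q : Type*} [Group Q] {T : Set Q}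
    (hT : ∀ a ∈ T, ∀ b ∈ T, a * b = b * a) {a b : Q}
    (ha : a ∈ closure T) (hb : b ∈ closure T) : a * b = b * a := by
  have h := closure_le_centralizer_centralizer T
  exact Set.centralizer_centralizer_comm_of_comm hT a (h ha) b (h hb)

/-- If the commutator subgroup of `K` maps into `γ₂ G`, then `γ i K` maps into `γ (i+1) G`. -/
private lemma lcs_map_le_aux {G : Type*} [Group G] (K : Subgroup G)
    (h1 : (lowerCentralSeries K 1).map K.subtype ≤ lowerCentralSeries G 2) :
    ∀ i, 1 ≤ i → (lowerCentralSeries K i).map K.subtype ≤ lowerCentralSeries G (i + 1) := by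
  intro i
  induction i with
  | zero => omega
  | succ i ih =>
    intro _
    rcases Nat.eq_or_lt_of_le (Nat.one_le_iff_ne_zero.mpr (Nat.succ_ne_zero i)) with h | h
    · obtain rfl : i = 0 := by omega
      exact h1
    have hi : 1 ≤ i := by omega
    have e1 : lowerCentralSeries K (i + 1) = ⁅lowerCentralSeries K i, (⊤ : Subgroup K)⁆ := rfl
    have e2 : lowerCentralSeries G (i + 2) = ⁅lowerCentralSeries G (i + 1), (⊤ : Subgroup G)⁆ := rfl
    calc (lowerCentralSeries K (i + 1)).map K.subtype
        = ⁅(lowerCentralSeries K i).map K.subtype, (⊤ : Subgroup K).map K.subtype⁆ := by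
          rw [e1, Subgroup.map_commutator]
      _ ≤ ⁅lowerCentralSeries G (i + 1), (⊤ : Subgroup G)⁆ :=
          Subgroup.commutator_mono (ih hi) le_top
      _ = lowerCentralSeries G (i + 1 + 1) := e2.symm

private theorem aux_unique_roots : ∀ (n : ℕ) (G : Type u) [Group G] [Group.IsNilpotent G],
    Group.nilpotencyClass G ≤ n → Monoid.IsTorsionFree G →
    ∀ x y : G, ∀ m : ℕ, 0 < m → x ^ m = y ^ m → x = y := by
  intro n
  induction n with
  | zero =>
    intro G _ _ hcl htf x y m hm h
    have : Subsingleton G := nilpotencyClass_zero_iff_subsingleton.mp (Nat.le_zero.mp hcl)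
    exact Subsingleton.elim x y
  | succ n ih =>
    intro G _ _ hcl htf x y m hm h
    -- Lemma B: the center of `G` is isolated.
    have hB : ∀ g : G, ∀ k : ℕ, 0 < k → g ^ k ∈ center G → g ∈ center G := by
      intro g k hk hgk
      rcases Nat.eq_zero_or_pos n with rfl | hn
      · -- class ≤ 1: `G` is abelian
        rw [mem_center_iff]
        intro h'
        have hmem : ⁅h', g⁆ ∈ lowerCentralSeries G 1 := by
          rw [lowerCentralSeries_one]
          exact commutator_mem_commutator (mem_top _) (mem_top _)
        have hbot : lowerCentralSeries G 1 = ⊥ :=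
          lowerCentralSeries_eq_bot_iff_nilpotencyClass_le.mpr hcl
        rw [hbot, Subgroup.mem_bot] at hmem
        exact (commutatorElement_eq_one_iff_commute.mp hmem)
      · rw [mem_center_iff]
        intro h'
        set S : Set G := {g} ∪ (lowerCentralSeries G 1 : Set G) with hS
        set K : Subgroup G := closure S with hK
        have hgK : g ∈ K := subset_closure (Or.inl rfl)
        have hcmem : ∀ c ∈ lowerCentralSeries G 1, c ∈ K := fun c hc =>
          subset_closure (Or.inr hc)
        have hcommel : ⁅h', g⁆ ∈ lowerCentralSeries G 1 := by
          rw [lowerCentralSeries_one]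
          exact commutator_mem_commutator (mem_top _) (mem_top _)
        have hconjK : h' * g * h'⁻¹ ∈ K := by
          have hmm := mul_mem (hcmem _ hcommel) hgK
          simpa [commutatorElement_def, mul_assoc] using hmm
        -- the commutator subgroup of `K` lands in `γ₂ G`
        have h1 : (lowerCentralSeries K 1).map K.subtype ≤ lowerCentralSeries G 2 := by
          have e1 : lowerCentralSeries K 1 = ⁅(⊤ : Subgroup K), ⊤⁆ := rfl
          rw [e1, Subgroup.map_commutator, ← MonoidHom.range_eq_map, Subgroup.range_subtype]
          rw [Subgroup.commutator_le]
          intro a ha b hb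
          set N : Subgroup G := lowerCentralSeries G 2 with hN
          set π : G →* G ⧸ N := QuotientGroup.mk' N with hπ
          have hker : ∀ w : G, w ∈ N → π w = 1 := by
            intro w hw
            rw [hπ, QuotientGroup.mk'_apply, QuotientGroup.eq_one_iff]
            exact hw
          suffices hsuff : Commute (π a) (π b) by
            have h2 : π ⁅a, b⁆ = 1 := by
              rw [map_commutatorElement]
              exact commutatorElement_eq_one_iff_commute.mpr hsuff
            rwa [hπ, QuotientGroup.mk'_apply, QuotientGroup.eq_one_iff] at h2
          have hcentral : ∀ c ∈ lowerCentralSeries G 1, ∀ w : G, π c * π w = π w * π c := by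
            intro c hc w
            have hcw : ⁅c, w⁆ ∈ N := commutator_mem_commutator hc (mem_top w)
            have h3 : π ⁅c, w⁆ = 1 := hker _ hcw
            rw [map_commutatorElement, commutatorElement_eq_one_iff_commute] at h3
            exact h3
          have hTcomm : ∀ u ∈ π '' S, ∀ v ∈ π '' S, u * v = v * u := by
            rintro u ⟨su, hsu, rfl⟩ v ⟨sv, hsv, rfl⟩
            rcases hsu with hsu | hsu
            · rcases hsv with hsv | hsv
              · rw [Set.mem_singleton_iff] at hsu hsv; rw [hsu, hsv]
              · exact (hcentral sv hsv su).symm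
            · exact hcentral su hsu sv
          have hmapK : ∀ w : G, w ∈ K → π w ∈ closure (π '' S) := by
            intro w hw
            rw [← MonoidHom.map_closure]
            exact mem_map_of_mem π hw
          exact commute_of_mem_closure_aux hTcomm (hmapK a ha) (hmapK b hb)
        -- `K` has class at most `n`
        haveI : Group.IsNilpotent K := Subgroup.isNilpotent K
        have hclK : Group.nilpotencyClass K ≤ n := by
          rw [← lowerCentralSeries_eq_bot_iff_nilpotencyClass_le]
          have hle := lcs_map_le_aux K h1 n hn
          have hGbot : lowerCentralSeries G (n + 1) = ⊥ :=
            lowerCentralSeries_eq_bot_iff_nilpotencyClass_le.mpr hcl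
          rw [hGbot, le_bot_iff] at hle
          exact ((lowerCentralSeries K n).map_eq_bot_iff_of_injective (subtype_injective K)).mp hle
        have htfK : Monoid.IsTorsionFree K := htf.subgroup K
        have hconj_pow : (h' * g * h'⁻¹) ^ k = g ^ k := by
          rw [conj_pow]
          exact (mem_center_iff.mp hgk h') ▸ by group
        have heq : (⟨h' * g * h'⁻¹, hconjK⟩ : K) = ⟨g, hgK⟩ := by
          apply ih K hclK htfK _ _ k hk
          ext
          push_cast
          exact hconj_pow
        have : h' * g * h'⁻¹ = g := congrArg Subtype.val heq
        calc h' * g = h' * g * h'⁻¹ * h' := by group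
          _ = g * h' := by rw [this]
    -- `G ⧸ center G` is torsion-free
    have htfQ : Monoid.IsTorsionFree (G ⧸ center G) := by
      intro q hq hfin
      obtain ⟨k, hk, hqk⟩ := isOfFinOrder_iff_pow_eq_one.mp hfin
      obtain ⟨g, rfl⟩ := QuotientGroup.mk_surjective q
      have hgk : g ^ k ∈ center G := by
        rw [← QuotientGroup.eq_one_iff]
        rw [QuotientGroup.mk_pow]
        exact hqk
      exact hq ((QuotientGroup.eq_one_iff g).mpr (hB g k hk hgk))
    have hclQ : Group.nilpotencyClass (G ⧸ center G) ≤ n := by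
      rw [nilpotencyClass_quotient_center]
      omega
    have hmk : (QuotientGroup.mk x : G ⧸ center G) = QuotientGroup.mk y := by
      apply ih _ hclQ htfQ _ _ m hm
      rw [← QuotientGroup.mk_pow, ← QuotientGroup.mk_pow, h]
    have hz : y⁻¹ * x ∈ center G := by
      have := hmk.symm
      rwa [QuotientGroup.eq] at this
    set z := y⁻¹ * x with hzdef
    have hx : x = y * z := by rw [hzdef]; group
    have hcom : Commute y z := (mem_center_iff.mp hz y)
    have hpow : x ^ m = y ^ m * z ^ m := by rw [hx, hcom.mul_pow]
    have hzm : z ^ m = 1 := by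
      rw [hpow] at h
      exact mul_left_cancel (by rw [h, mul_one])
    have hz1 : z = 1 := by
      by_contra hne
      exact htf z hne (isOfFinOrder_iff_pow_eq_one.mpr ⟨m, hm, hzm⟩)
    rw [hx, hz1, mul_one]

end Port

/-- In a torsion-free nilpotent group, `m`-th roots are unique: if `x^m = y^m`
for some positive integer `m`, then `x = y`. -/
theorem eq_of_pow_eq_pow_of_torsionFree_nilpotent (G : Type*) [Group G]
    [Group.IsNilpotent G] (htf : Monoid.IsTorsionFree G)
    (x y : G) (m : ℕ) (hm : 0 < m) (h : x ^ m = y ^ m) : x = y :=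
  Port.aux_unique_roots (Group.nilpotencyClass G) G le_rfl htf x y m hm h
end

section
/- Let G be a nilpotent group of class at most c whose abelianization G/G' has finite exponent m > 0. Then G has finite exponent dividing m^c. -/
open scoped commutatorElement

private lemma comm_pow_aux {Q : Type*} [Group Q] (a b : Q)
    (hcen : ∀ n : ℕ, ⁅a ^ n, b⁆ ∈ Subgroup.center Q) :
    ∀ n : ℕ, ⁅a ^ n, b⁆ = ⁅a, b⁆ ^ n := by
  intro n
  induction n with
  | zero => simp [commutatorElement_def]
  | succ n ih =>
    have h1 : ⁅a ^ (n + 1), b⁆ = a * ⁅a ^ n, b⁆ * a⁻¹ * ⁅a, b⁆ := by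
      simp only [commutatorElement_def, pow_succ]
      group
    have h2 : a * ⁅a ^ n, b⁆ * a⁻¹ = ⁅a ^ n, b⁆ := by
      rw [Subgroup.mem_center_iff.mp (hcen n) a, mul_inv_cancel_right]
    rw [h1, h2, ih, ← pow_succ]

private lemma step_aux (G : Type*) [Group G] (m : ℕ)
    (h : ∀ g : G, g ^ m ∈ commutator G) :
    ∀ k : ℕ, ∀ x ∈ (⊤ : Subgroup G).lowerCentralSeries k, x ^ m ∈ (⊤ : Subgroup G).lowerCentralSeries (k + 1) := by
  intro k
  induction k with
  | zero => intro x _; exact h x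
  | succ k ih =>
    intro x hx
    set N := (⊤ : Subgroup G).lowerCentralSeries (k + 2) with hN
    let π := QuotientGroup.mk' N
    have hcen : ∀ u ∈ (⊤ : Subgroup G).lowerCentralSeries (k + 1), π u ∈ Subgroup.center (G ⧸ N) := by
      intro u hu
      rw [Subgroup.mem_center_iff]
      intro q
      obtain ⟨g, rfl⟩ := QuotientGroup.mk'_surjective N q
      have hmem : ⁅u, g⁆ ∈ N := by
        rw [hN, Subgroup.lowerCentralSeries_succ]
        exact Subgroup.commutator_mem_commutator hu (Subgroup.mem_top g)
      have h1 : π ⁅u, g⁆ = 1 := (QuotientGroup.eq_one_iff _).mpr hmem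
      rw [map_commutatorElement] at h1
      exact ((commutatorElement_eq_one_iff_commute.mp h1).symm).eq
    suffices hq : (π x) ^ m = 1 by
      have : π (x ^ m) = 1 := by rw [map_pow]; exact hq
      exact (QuotientGroup.eq_one_iff _).mp this
    have hx' : x ∈ Subgroup.closure
        {g : G | ∃ g₁ ∈ (⊤ : Subgroup G).lowerCentralSeries k, ∃ g₂ ∈ (⊤ : Subgroup G), ⁅g₁, g₂⁆ = g} := by
      exact hx
    have hmemback : ∀ y : G, y ∈ Subgroup.closure
        {g : G | ∃ g₁ ∈ (⊤ : Subgroup G).lowerCentralSeries k, ∃ g₂ ∈ (⊤ : Subgroup G), ⁅g₁, g₂⁆ = g} →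
        y ∈ (⊤ : Subgroup G).lowerCentralSeries (k + 1) := by
      intro y hy
      exact hy
    refine Subgroup.closure_induction (p := fun z _ => (π z) ^ m = 1) ?_ ?_ ?_ ?_ hx'
    · rintro z ⟨y, hy, g, -, rfl⟩
      have hcenn : ∀ n : ℕ, ⁅(π y) ^ n, π g⁆ ∈ Subgroup.center (G ⧸ N) := by
        intro n
        rw [← map_pow, ← map_commutatorElement]
        refine hcen _ ?_
        rw [Subgroup.lowerCentralSeries_succ]
        exact Subgroup.commutator_mem_commutator (pow_mem hy n) (Subgroup.mem_top g)
      have h1 : ⁅π y, π g⁆ ^ m = ⁅(π y) ^ m, π g⁆ := (comm_pow_aux _ _ hcenn m).symm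
      have h2 : ⁅y ^ m, g⁆ ∈ N := by
        rw [hN, Subgroup.lowerCentralSeries_succ]
        exact Subgroup.commutator_mem_commutator (ih y hy) (Subgroup.mem_top g)
      have h3 : π ⁅y ^ m, g⁆ = 1 := (QuotientGroup.eq_one_iff _).mpr h2
      rw [map_commutatorElement, map_pow] at h3
      rw [map_commutatorElement, h1, h3]
    · simp
    · intro a b ha hb iha ihb
      have hca : π a ∈ Subgroup.center (G ⧸ N) := hcen a (hmemback a ha)
      have hcom : Commute (π a) (π b) := Subgroup.mem_center_iff.mp hca (π b) |>.symm
      rw [map_mul, hcom.mul_pow, iha, ihb, one_mul]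
    · intro a ha iha
      rw [map_inv, inv_pow, iha, inv_one]

/-- If `G` is nilpotent of class at most `c` and its abelianization has exponent
`m > 0` (i.e. `g^m ∈ G'` for all `g`), then `G` has exponent dividing `m^c`. -/
theorem exponent_dvd_pow_class_of_abelianization_exponent (G : Type*) [Group G]
    (c m : ℕ) (hm : 0 < m) (hc : (⊤ : Subgroup G).lowerCentralSeries c = ⊥)
    (h : ∀ g : G, g ^ m ∈ commutator G) :
    ∀ g : G, g ^ (m ^ c) = 1 := by
  intro g
  have key : ∀ k : ℕ, g ^ (m ^ k) ∈ (⊤ : Subgroup G).lowerCentralSeries k := by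
    intro k
    induction k with
    | zero => simp
    | succ k ih =>
      have := step_aux G m h k _ ih
      rwa [← pow_mul, ← pow_succ] at this
  have hfin := key c
  rw [hc] at hfin
  simpa using hfin
end

section
/- Let L be a free Lie algebra of finite rank n ≥ 2 over a field K of characteristic zero, and let I be a proper ideal of L that is invariant under all Lie algebra endomorphisms of L (a fully invariant ideal). Then I is contained in the derived subalgebra L' = [L, L]. -/
attribute [local instance] LieRing.ofAssociativeRing

namespace FreeLieProofAux

variable (K : Type*) [Field K] {X : Type*}

/-- The coordinate functional on a free Lie algebra, reading off the coefficient of the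
`i`-th generator (values in `K` viewed as an abelian Lie algebra). -/
noncomputable def mu [DecidableEq X] (i : X) : FreeLieAlgebra K X →ₗ⁅K⁆ K :=
  FreeLieAlgebra.lift K (fun j => if j = i then (1 : K) else 0)

lemma bracketK (a b : K) : ⁅a, b⁆ = 0 := by
  rw [Ring.lie_def, mul_comm, sub_self]

/-- The free Lie algebra is generated (as a Lie algebra) by its generators. -/
lemma lieSpan_range_of :
    LieSubalgebra.lieSpan K (FreeLieAlgebra K X) (Set.range (FreeLieAlgebra.of K)) = ⊤ := by
  set S := LieSubalgebra.lieSpan K (FreeLieAlgebra K X) (Set.range (FreeLieAlgebra.of K)) with hS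
  have hmem : ∀ i : X, FreeLieAlgebra.of K i ∈ S :=
    fun i => LieSubalgebra.subset_lieSpan (Set.mem_range_self i)
  let j : FreeLieAlgebra K X →ₗ⁅K⁆ S :=
    FreeLieAlgebra.lift K (fun i => ⟨FreeLieAlgebra.of K i, hmem i⟩)
  have hcomp : S.incl.comp j = LieHom.id := by
    apply FreeLieAlgebra.hom_ext
    intro i
    simp [j]
  rw [eq_top_iff]
  intro x _
  have hx : S.incl (j x) = x := by
    have := congrArg (fun F : FreeLieAlgebra K X →ₗ⁅K⁆ FreeLieAlgebra K X => F x) hcomp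
    simpa using this
  have : (j x : FreeLieAlgebra K X) ∈ S := (j x).2
  rwa [show ((j x : S) : FreeLieAlgebra K X) = x from hx] at this

/-- Every element of a Lie subalgebra containing the generators. -/
lemma mem_of_forall_gen (S : LieSubalgebra K (FreeLieAlgebra K X))
    (h : ∀ i, FreeLieAlgebra.of K i ∈ S) (x : FreeLieAlgebra K X) : x ∈ S := by
  have h1 : Set.range (FreeLieAlgebra.of K) ⊆ (S : Set (FreeLieAlgebra K X)) := by
    rintro _ ⟨i, rfl⟩; exact h i
  have h2 := (LieSubalgebra.lieSpan_le (R := K) (L := FreeLieAlgebra K X)).mpr h1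
  rw [lieSpan_range_of] at h2
  exact h2 (LieSubalgebra.mem_top x)

/-- Decomposition: every element equals its linear part plus an element of the derived
subalgebra. -/
lemma decomp [Fintype X] [DecidableEq X] (x : FreeLieAlgebra K X) :
    x - ∑ i : X, mu K i x • FreeLieAlgebra.of K i ∈
      LieAlgebra.derivedSeries K (FreeLieAlgebra K X) 1 := by
  set D := LieAlgebra.derivedSeries K (FreeLieAlgebra K X) 1 with hD
  have hDbrk : ∀ a b : FreeLieAlgebra K X, ⁅a, b⁆ ∈ D := by
    intro a b
    rw [hD, LieAlgebra.derivedSeries_def, LieAlgebra.derivedSeriesOfIdeal_succ,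
      LieAlgebra.derivedSeriesOfIdeal_zero]
    exact LieSubmodule.lie_mem_lie (LieSubmodule.mem_top a) (LieSubmodule.mem_top b)
  let S : LieSubalgebra K (FreeLieAlgebra K X) :=
    { carrier := {y | y - ∑ i : X, mu K i y • FreeLieAlgebra.of K i ∈ D}
      add_mem' := by
        intro a b ha hb
        have key : (a + b) - ∑ i : X, mu K i (a + b) • FreeLieAlgebra.of K i =
            (a - ∑ i : X, mu K i a • FreeLieAlgebra.of K i) +
            (b - ∑ i : X, mu K i b • FreeLieAlgebra.of K i) := by
          simp only [map_add, add_smul, Finset.sum_add_distrib]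
          abel
        show _ ∈ D
        rw [key]
        exact D.add_mem ha hb
      zero_mem' := by
        show _ ∈ D
        simp only [map_zero, zero_smul, Finset.sum_const_zero, sub_zero]
        exact D.zero_mem
      smul_mem' := by
        intro c a ha
        have key : (c • a) - ∑ i : X, mu K i (c • a) • FreeLieAlgebra.of K i =
            c • (a - ∑ i : X, mu K i a • FreeLieAlgebra.of K i) := by
          simp only [map_smul, smul_sub, Finset.smul_sum, smul_smul, smul_eq_mul]
        show _ ∈ D
        rw [key]
        exact D.smul_mem c ha
      lie_mem' := by
        intro a b _ _
        show _ ∈ D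
        have h0 : ∀ i : X, mu K i ⁅a, b⁆ = 0 := by
          intro i
          rw [LieHom.map_lie, bracketK]
        simp only [h0, zero_smul, Finset.sum_const_zero, sub_zero]
        exact hDbrk a b }
  have hgen : ∀ i : X, FreeLieAlgebra.of K i ∈ S := by
    intro i
    show FreeLieAlgebra.of K i - ∑ j : X, mu K j (FreeLieAlgebra.of K i) • FreeLieAlgebra.of K j ∈ D
    have : ∀ j : X, mu K j (FreeLieAlgebra.of K i) = if i = j then (1 : K) else 0 := by
      intro j
      simp [mu, FreeLieAlgebra.lift_of_apply]
    simp only [this, ite_smul, one_smul, zero_smul, Finset.sum_ite_eq, Finset.mem_univ, if_true,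
      sub_self]
    exact D.zero_mem
  exact mem_of_forall_gen K S hgen x

end FreeLieProofAux

/-- A proper fully invariant ideal of a free Lie algebra of finite rank `n ≥ 2` over a
field of characteristic zero is contained in the derived subalgebra. -/
theorem fully_invariant_ideal_le_derived (K : Type*) [Field K] [CharZero K]
    (n : ℕ) (hn : 2 ≤ n) (I : LieIdeal K (FreeLieAlgebra K (Fin n))) (hI : I ≠ ⊤)
    (hfi : ∀ f : FreeLieAlgebra K (Fin n) →ₗ⁅K⁆ FreeLieAlgebra K (Fin n),
      ∀ x ∈ I, f x ∈ I) :
    I ≤ LieAlgebra.derivedSeries K (FreeLieAlgebra K (Fin n)) 1 := by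
  intro x hx
  by_cases h : ∀ i : Fin n, FreeLieProofAux.mu K i x = 0
  · have hd := FreeLieProofAux.decomp K x
    simp only [h, zero_smul, Finset.sum_const_zero, sub_zero] at hd
    exact hd
  · exfalso
    push_neg at h
    obtain ⟨i, hi⟩ := h
    apply hI
    -- the "rank one" endomorphism sending `y` to `(μ i y / μ i x) • ℓ_k`
    have hofk : ∀ k : Fin n, FreeLieAlgebra.of K k ∈ I := by
      intro k
      set v : FreeLieAlgebra K (Fin n) :=
        (FreeLieProofAux.mu K i x)⁻¹ • FreeLieAlgebra.of K k with hv
      let ν : FreeLieAlgebra K (Fin n) →ₗ⁅K⁆ FreeLieAlgebra K (Fin n) :=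
        { toLinearMap := LinearMap.smulRight (FreeLieProofAux.mu K i).toLinearMap v
          map_lie' := by
            intro a b
            show FreeLieProofAux.mu K i ⁅a, b⁆ • v = ⁅_ • v, _ • v⁆
            rw [LieHom.map_lie, FreeLieProofAux.bracketK, zero_smul, lie_smul, smul_lie,
              lie_self, smul_zero, smul_zero]
        }
      have hνx : ν x = FreeLieAlgebra.of K k := by
        show FreeLieProofAux.mu K i x • v = FreeLieAlgebra.of K k
        rw [hv, smul_smul, mul_inv_cancel₀ hi, one_smul]
      have := hfi ν x hx
      rwa [hνx] at this
    rw [eq_top_iff]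
    intro y _
    exact FreeLieProofAux.mem_of_forall_gen K (LieIdeal.toLieSubalgebra K _ I) hofk y
end

section
/- Let G be a group, L a Lie ring, and σ_i : γ_i(G)/γ_{i+1}(G) → L_i surjective additive homomorphisms compatible with commutators as in Hall's setup (so that [σ_i(x̄), σ_j(ȳ)] = σ_{i+j}(overline{(x,y)})), with L = L_1 + L_2 + ⋯. Then for every r ≥ 1, γ_r(L) = L_r + L_{r+1} + ⋯. -/
/-- The three subgroups lemma, modulo a normal subgroup. -/
lemma aux_three_subgroups {G : Type*} [Group G] {A B C N : Subgroup G} [N.Normal]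
    (h1 : ⁅⁅B, C⁆, A⁆ ≤ N) (h2 : ⁅⁅C, A⁆, B⁆ ≤ N) : ⁅⁅A, B⁆, C⁆ ≤ N := by
  let π := QuotientGroup.mk' N
  have key : ∀ X Y : Subgroup G, ⁅X, Y⁆ ≤ N ↔ ⁅X.map π, Y.map π⁆ = ⊥ := by
    intro X Y
    rw [← Subgroup.map_commutator, Subgroup.map_eq_bot_iff, QuotientGroup.ker_mk']
  rw [key] at h1 h2 ⊢
  rw [Subgroup.map_commutator] at h1 h2 ⊢
  exact Subgroup.commutator_commutator_eq_bot_of_rotate h1 h2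

/-- `[γ_a(G), γ_b(G)] ≤ γ_{a+b+1}(G)` (with `0`-based indexing of the lower central
series of a group). -/
lemma aux_lcs_comm {G : Type*} [Group G] :
    ∀ b a : ℕ, ⁅(⊤ : Subgroup G).lowerCentralSeries a, (⊤ : Subgroup G).lowerCentralSeries b⁆ ≤
      (⊤ : Subgroup G).lowerCentralSeries (a + b + 1) := by
  intro b
  induction b with
  | zero =>
      intro a
      rw [Subgroup.lowerCentralSeries_zero]
      exact le_of_eq rfl
  | succ b ih =>
      intro a
      have hdef : (⊤ : Subgroup G).lowerCentralSeries (b + 1) = ⁅(⊤ : Subgroup G).lowerCentralSeries b, ⊤⁆ := rfl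
      rw [hdef, Subgroup.commutator_comm]
      have h1 : ⁅⁅(⊤ : Subgroup G), (⊤ : Subgroup G).lowerCentralSeries a⁆, (⊤ : Subgroup G).lowerCentralSeries b⁆ ≤
          (⊤ : Subgroup G).lowerCentralSeries (a + (b + 1) + 1) := by
        rw [Subgroup.commutator_comm (⊤ : Subgroup G)]
        have : ⁅(⊤ : Subgroup G).lowerCentralSeries a, (⊤ : Subgroup G)⁆ = (⊤ : Subgroup G).lowerCentralSeries (a + 1) := rfl
        rw [this]
        have := ih (a + 1)
        refine this.trans (le_of_eq ?_)
        congr 1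
        omega
      have h2 : ⁅⁅(⊤ : Subgroup G).lowerCentralSeries a, (⊤ : Subgroup G).lowerCentralSeries b⁆, (⊤ : Subgroup G)⁆ ≤
          (⊤ : Subgroup G).lowerCentralSeries (a + (b + 1) + 1) := by
        have step : ⁅⁅(⊤ : Subgroup G).lowerCentralSeries a, (⊤ : Subgroup G).lowerCentralSeries b⁆, (⊤ : Subgroup G)⁆ ≤
            ⁅(⊤ : Subgroup G).lowerCentralSeries (a + b + 1), (⊤ : Subgroup G)⁆ :=
          Subgroup.commutator_mono (ih a) le_rfl
        rw [show a + (b + 1) + 1 = a + b + 1 + 1 by omega]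
        exact step
      exact aux_three_subgroups h1 h2

/-- In Hall's setup (maps `s i` from `γ_i(G)` onto additive subgroups `Li i` of a Lie ring
`L`, compatible with commutators, with `L = L_1 + L_2 + ⋯`), for every `r ≥ 1` the `r`-th
term of the lower central series of the Lie ring `L` equals `L_r + L_{r+1} + ⋯`. -/
theorem lie_lowerCentralSeries_eq_sum (G : Type*) [Group G]
    (L : Type*) [LieRing L] (s : ℕ → G → L) (Li : ℕ → AddSubgroup L)
    (hadd : ∀ i, 1 ≤ i → ∀ x ∈ (⊤ : Subgroup G).lowerCentralSeries (i - 1),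
      ∀ y ∈ (⊤ : Subgroup G).lowerCentralSeries (i - 1), s i (x * y) = s i x + s i y)
    (hker : ∀ i, 1 ≤ i → ∀ x ∈ (⊤ : Subgroup G).lowerCentralSeries i, s i x = 0)
    (hmem : ∀ i, 1 ≤ i → ∀ x ∈ (⊤ : Subgroup G).lowerCentralSeries (i - 1), s i x ∈ Li i)
    (hsurj : ∀ i, 1 ≤ i → ∀ a ∈ Li i, ∃ x ∈ (⊤ : Subgroup G).lowerCentralSeries (i - 1), s i x = a)
    (hsum : (⨆ i : ℕ, ⨆ _ : 1 ≤ i, Li i) = (⊤ : AddSubgroup L))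
    (hcompat : ∀ i j, 1 ≤ i → 1 ≤ j → ∀ x ∈ (⊤ : Subgroup G).lowerCentralSeries (i - 1),
      ∀ y ∈ (⊤ : Subgroup G).lowerCentralSeries (j - 1),
        ⁅s i x, s j y⁆ = s (i + j) (x⁻¹ * y⁻¹ * x * y)) :
    ∀ r : ℕ, 1 ≤ r →
      ((LieModule.lowerCentralSeries ℤ L L (r - 1) : LieSubmodule ℤ L L) : Set L) =
        ((⨆ i : ℕ, ⨆ _ : r ≤ i, Li i : AddSubgroup L) : Set L) := by
  set A : ℕ → AddSubgroup L := fun k => ⨆ i : ℕ, ⨆ _ : k ≤ i, Li i with hA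
  -- basic facts about `s`
  have hone : ∀ i, 1 ≤ i → s i 1 = 0 := fun i hi => hker i hi 1 (one_mem _)
  have hinv : ∀ i, 1 ≤ i → ∀ x ∈ (⊤ : Subgroup G).lowerCentralSeries (i - 1), s i x⁻¹ = -s i x := by
    intro i hi x hx
    have h := hadd i hi x hx x⁻¹ (inv_mem hx)
    rw [mul_inv_cancel, hone i hi] at h
    exact eq_neg_of_add_eq_zero_right h.symm
  -- membership in the tail sums
  have hAmem : ∀ k i, k ≤ i → ∀ a ∈ Li i, a ∈ A k := by
    intro k i hk a ha
    exact le_iSup (fun i => ⨆ _ : k ≤ i, Li i) i (le_iSup (fun _ : k ≤ i => Li i) hk ha)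
  -- brackets of tail sums
  have hbr : ∀ k, 1 ≤ k → ∀ a ∈ A 1, ∀ b ∈ A k, ⁅a, b⁆ ∈ A (k + 1) := by
    intro k hk a ha b hb
    refine AddSubgroup.iSup_induction (x := a) (fun i => ⨆ _ : 1 ≤ i, Li i)
      (C := fun a => ⁅a, b⁆ ∈ A (k + 1)) ha ?_ (by show ⁅(0:L), b⁆ ∈ A (k + 1); rw [zero_lie]; exact zero_mem _) ?_
    · intro i a' ha''
      have ha' : a' ∈ ⨆ _ : 1 ≤ i, Li i := ha''
      by_cases hi : 1 ≤ i
      · rw [iSup_pos hi] at ha'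
        refine AddSubgroup.iSup_induction (x := b) (fun j => ⨆ _ : k ≤ j, Li j)
          (C := fun b => ⁅a', b⁆ ∈ A (k + 1)) hb ?_ (by show ⁅a', (0:L)⁆ ∈ A (k + 1); rw [lie_zero]; exact zero_mem _) ?_
        · intro j b' hb''
          have hb' : b' ∈ ⨆ _ : k ≤ j, Li j := hb''
          by_cases hj : k ≤ j
          · rw [iSup_pos hj] at hb'
            obtain ⟨x, hx, rfl⟩ := hsurj i hi a' ha'
            obtain ⟨y, hy, rfl⟩ := hsurj j (by omega) b' hb'
            rw [hcompat i j hi (by omega) x hx y hy]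
            refine hAmem (k + 1) (i + j) (by omega) _ (hmem (i + j) (by omega) _ ?_)
            have hc : x⁻¹ * y⁻¹ * x * y = @Bracket.bracket G G commutatorElement x⁻¹ y⁻¹ := by
              rw [commutatorElement_def]; group
            rw [hc]
            have hmm := aux_lcs_comm (j - 1) (i - 1)
              (Subgroup.commutator_mem_commutator (inv_mem hx) (inv_mem hy))
            have : (i - 1) + (j - 1) + 1 = i + j - 1 := by omega
            rwa [this] at hmm
          · rw [iSup_neg hj, AddSubgroup.mem_bot] at hb'
            subst hb'
            rw [lie_zero]
            exact zero_mem _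
        · intro u v hu hv
          rw [lie_add]
          exact add_mem hu hv
      · rw [iSup_neg hi, AddSubgroup.mem_bot] at ha'
        subst ha'
        rw [zero_lie]
        exact zero_mem _
    · intro u v hu hv
      rw [add_lie]
      exact add_mem hu hv
  -- the main induction
  intro r hr
  induction r, hr using Nat.le_induction with
  | base =>
      rw [hsum]
      simp
  | succ n hn ih =>
      obtain ⟨m, rfl⟩ : ∃ m, n = m + 1 := ⟨n - 1, by omega⟩
      simp only [Nat.add_sub_cancel] at ih ⊢
      apply Set.Subset.antisymm
      · -- lcs (m+1) ⊆ A (m+2)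
        intro z hz
        rw [SetLike.mem_coe, ← LieSubmodule.mem_toSubmodule,
          LieModule.lowerCentralSeries_succ,
          LieSubmodule.lieIdeal_oper_eq_linear_span'] at hz
        have hsub : {w : L | ∃ x ∈ (⊤ : LieIdeal ℤ L),
            ∃ nn ∈ LieModule.lowerCentralSeries ℤ L L m, ⁅x, nn⁆ = w} ⊆
            (AddSubgroup.toIntSubmodule (A (m + 1 + 1)) : Set L) := by
          rintro _ ⟨x, -, nn, hnn, rfl⟩
          have hx1 : x ∈ A 1 := by
            show x ∈ ⨆ i : ℕ, ⨆ _ : 1 ≤ i, Li i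
            rw [hsum]; trivial
          have hnn' : nn ∈ A (m + 1) := by
            have : nn ∈ ((LieModule.lowerCentralSeries ℤ L L m : LieSubmodule ℤ L L) :
                Set L) := hnn
            rw [ih] at this
            exact this
          exact hbr (m + 1) (by omega) x hx1 nn hnn'
        have := Submodule.span_le.mpr hsub hz
        exact this
      · -- A (m+2) ⊆ lcs (m+1)
        intro z hz
        rw [SetLike.mem_coe]
        refine AddSubgroup.iSup_induction (x := z) (fun i => ⨆ _ : m + 1 + 1 ≤ i, Li i)
          (C := fun z => z ∈ LieModule.lowerCentralSeries ℤ L L (m + 1)) hz ?_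
          (zero_mem _) (fun _ _ h1 h2 => add_mem h1 h2)
        intro i a ha''
        have ha : a ∈ ⨆ _ : m + 1 + 1 ≤ i, Li i := ha''
        clear ha''
        by_cases hi : m + 1 + 1 ≤ i
        · rw [iSup_pos hi] at ha
          obtain ⟨t, rfl⟩ : ∃ t, i = t + 2 := ⟨i - 2, by omega⟩
          obtain ⟨x, hx, rfl⟩ := hsurj (t + 2) (by omega) a ha
          have hx' : x ∈ (⊤ : Subgroup G).lowerCentralSeries (t + 1) := hx
          clear hx ha
          rw [Subgroup.mem_lowerCentralSeries_succ_iff] at hx'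
          induction hx' using Subgroup.closure_induction with
          | mem g hg =>
              obtain ⟨p, hp, q, -, rfl⟩ := hg
              have hc := hcompat (t + 1) 1 (by omega) (by omega) p⁻¹
                (by simpa using inv_mem hp) q⁻¹ trivial
              have heq : (p⁻¹)⁻¹ * (q⁻¹)⁻¹ * p⁻¹ * q⁻¹ = p * q * p⁻¹ * q⁻¹ := by group
              rw [heq] at hc
              rw [show t + 2 = t + 1 + 1 from rfl, commutatorElement_def, ← hc]
              have h1 : s (t + 1) p⁻¹ ∈ Li (t + 1) :=
                hmem (t + 1) (by omega) _ (by simpa using inv_mem hp)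
              have h2 : s (t + 1) p⁻¹ ∈ A (m + 1) := hAmem (m + 1) (t + 1) (by omega) _ h1
              have h3 : s (t + 1) p⁻¹ ∈ LieModule.lowerCentralSeries ℤ L L m := by
                have : s (t + 1) p⁻¹ ∈ ((⨆ i : ℕ, ⨆ _ : m + 1 ≤ i, Li i : AddSubgroup L) :
                    Set L) := h2
                rw [← ih] at this
                exact this
              rw [← lie_skew]
              refine neg_mem ?_
              rw [LieModule.lowerCentralSeries_succ]
              exact LieSubmodule.lie_mem_lie (LieSubmodule.mem_top _) h3
          | one =>
              rw [hone (t + 2) (by omega)]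
              exact zero_mem _
          | mul u v hu hv hcu hcv =>
              rw [hadd (t + 2) (by omega) u hu v hv]
              exact add_mem hcu hcv
          | inv u hu hcu =>
              rw [hinv (t + 2) (by omega) u hu]
              exact neg_mem hcu
        · rw [iSup_neg hi, AddSubgroup.mem_bot] at ha
          subst ha
          exact zero_mem _
end
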